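/- arXiv:1701.06139 — 2 statements merged into one kernel-verified Lean document; each statement's English description precedes it below -/
import Mathlib

section
/- Every dense r-uniform hypergraph G covers pairs: for every pair of distinct vertices i, j of G there exists an edge e ∈ E(G) with {i,j} ⊆ e. -/
structure UniformHypergraph (r : ℕ) where
  verts : Finset ℕ
  edges : Finset (Finset ℕ)
  edge_sub : ∀ e ∈ edges, e ⊆ verts
  edge_card : ∀ e ∈ edges, e.card = r

namespace UniformHypergraph

variable {r : ℕ}

/-- The polynomial value `λ(E, x) = Σ_{e ∈ E} Π_{i ∈ e} x_i`. -/
def polyValue (E : Finset (Finset ℕ)) (x : ℕ → ℝ) : ℝ :=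
  ∑ e ∈ E, ∏ i ∈ e, x i

/-- A legal weighting: nonnegative, supported on the vertex set, summing to 1. -/
def LegalWeighting (G : UniformHypergraph r) (x : ℕ → ℝ) : Prop :=
  (∀ i, 0 ≤ x i) ∧ (∀ i ∉ G.verts, x i = 0) ∧ ∑ i ∈ G.verts, x i = 1

/-- The Lagrangian of a hypergraph. -/
noncomputable def lagrangian (G : UniformHypergraph r) : ℝ :=
  sSup {l : ℝ | ∃ x, G.LegalWeighting x ∧ l = polyValue G.edges x}

/-- An optimum weighting attains the Lagrangian. -/
def IsOptimal (G : UniformHypergraph r) (x : ℕ → ℝ) : Prop :=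
  G.LegalWeighting x ∧ polyValue G.edges x = G.lagrangian

def IsSubgraph (H G : UniformHypergraph r) : Prop :=
  H.verts ⊆ G.verts ∧ H.edges ⊆ G.edges

def IsProperSubgraph (H G : UniformHypergraph r) : Prop :=
  H.IsSubgraph G ∧ (H.verts ≠ G.verts ∨ H.edges ≠ G.edges)

/-- A hypergraph is dense if every proper subgraph has strictly smaller Lagrangian. -/
def Dense (G : UniformHypergraph r) : Prop :=
  ∀ H : UniformHypergraph r, H.IsProperSubgraph G → H.lagrangian < G.lagrangian

/-- The link `E_i` of a vertex `i`. -/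
def link (G : UniformHypergraph r) (i : ℕ) : Finset (Finset ℕ) :=
  (G.edges.filter fun e => i ∈ e).image fun e => e.erase i

/-- The pair link `E_{ij}`. -/
def pairLink (G : UniformHypergraph r) (i j : ℕ) : Finset (Finset ℕ) :=
  (G.edges.filter fun e => i ∈ e ∧ j ∈ e).image fun e => (e.erase i).erase j

/-- `E_{i \ j} = E_i ∩ E_j^c`. -/
def linkDiff (G : UniformHypergraph r) (i j : ℕ) : Finset (Finset ℕ) :=
  (G.link i).filter fun A => j ∉ A ∧ insert j A ∉ G.edges

/-- `G` contains a clique of order `t`. -/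
def HasClique (G : UniformHypergraph r) (t : ℕ) : Prop :=
  ∃ S ⊆ G.verts, S.card = t ∧ S.powersetCard r ⊆ G.edges

/-- `G` is left-compressed: replacing a vertex of an edge by a smaller vertex
not in the edge yields an edge. -/
def LeftCompressed (G : UniformHypergraph r) : Prop :=
  ∀ e ∈ G.edges, ∀ i j : ℕ, i ∈ G.verts → i < j → j ∈ e → i ∉ e →
    insert i (e.erase j) ∈ G.edges

/-- The subgraph induced on a vertex set `S`. -/
def induce (G : UniformHypergraph r) (S : Finset ℕ) : UniformHypergraph r :=
  ⟨G.verts ∩ S, G.edges.filter fun e => e ⊆ S,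
   fun e he => Finset.subset_inter (G.edge_sub e (Finset.mem_filter.mp he).1)
     (Finset.mem_filter.mp he).2,
   fun e he => G.edge_card e (Finset.mem_filter.mp he).1⟩

end UniformHypergraph

/-- The complete `r`-graph on vertex set `{1, …, t}`. -/
def completeHG (t r : ℕ) : UniformHypergraph r :=
  ⟨Finset.Icc 1 t, (Finset.Icc 1 t).powersetCard r,
   fun _ he => (Finset.mem_powersetCard.mp he).1,
   fun _ he => (Finset.mem_powersetCard.mp he).2⟩

/-- `H₁ = [t-1]^{(3)} \ {(t-3)(t-2)(t-1)}`. -/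
def H1 (t : ℕ) : UniformHypergraph 3 :=
  ⟨Finset.Icc 1 (t-1), (completeHG (t-1) 3).edges.erase {t-3, t-2, t-1},
   fun e he => (completeHG (t-1) 3).edge_sub e (Finset.mem_of_mem_erase he),
   fun e he => (completeHG (t-1) 3).edge_card e (Finset.mem_of_mem_erase he)⟩


namespace UniformHypergraph

variable {r : ℕ}

/-- Remove a vertex and all edges through it. -/
def removeVert (G : UniformHypergraph r) (v : ℕ) : UniformHypergraph r :=
  ⟨G.verts.erase v, G.edges.filter fun e => v ∉ e,
   fun e he => Finset.subset_erase.mpr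
     ⟨G.edge_sub e (Finset.mem_filter.mp he).1, (Finset.mem_filter.mp he).2⟩,
   fun e he => G.edge_card e (Finset.mem_filter.mp he).1⟩

lemma removeVert_proper (G : UniformHypergraph r) {v : ℕ} (hv : v ∈ G.verts) :
    (G.removeVert v).IsProperSubgraph G := by
  refine ⟨⟨Finset.erase_subset _ _, Finset.filter_subset _ _⟩, Or.inl ?_⟩
  intro h
  simp only [removeVert] at h
  rw [← h] at hv
  exact Finset.notMem_erase v G.verts hv

lemma legal_le_one (G : UniformHypergraph r) {x : ℕ → ℝ} (hx : G.LegalWeighting x) (k : ℕ) :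
    x k ≤ 1 := by
  by_cases hk : k ∈ G.verts
  · calc x k ≤ ∑ i ∈ G.verts, x i :=
        Finset.single_le_sum (fun i _ => hx.1 i) hk
      _ = 1 := hx.2.2
  · rw [hx.2.1 k hk]; norm_num

lemma polyValue_le_card (E : Finset (Finset ℕ)) {x : ℕ → ℝ}
    (h0 : ∀ k, 0 ≤ x k) (h1 : ∀ k, x k ≤ 1) : polyValue E x ≤ E.card := by
  calc polyValue E x ≤ ∑ _e ∈ E, (1 : ℝ) :=
      Finset.sum_le_sum fun e _ => Finset.prod_le_one (fun k _ => h0 k) (fun k _ => h1 k)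
    _ = E.card := by simp

lemma bddAbove_lagrangianSet (G : UniformHypergraph r) :
    BddAbove {l : ℝ | ∃ x, G.LegalWeighting x ∧ l = polyValue G.edges x} := by
  refine ⟨G.edges.card, fun l hl => ?_⟩
  obtain ⟨x, hx, rfl⟩ := hl
  exact polyValue_le_card _ hx.1 (G.legal_le_one hx)

lemma lagrangianSet_nonempty (G : UniformHypergraph r) (hv : G.verts.Nonempty) :
    {l : ℝ | ∃ x, G.LegalWeighting x ∧ l = polyValue G.edges x}.Nonempty := by
  have hc : (0 : ℝ) < G.verts.card := by
    exact_mod_cast Finset.card_pos.mpr hv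
  refine ⟨polyValue G.edges (fun k => if k ∈ G.verts then ((G.verts.card : ℝ))⁻¹ else 0),
    ⟨fun k => if k ∈ G.verts then ((G.verts.card : ℝ))⁻¹ else 0,
     ⟨fun k => ?_, fun k hk => by simp [hk], ?_⟩, rfl⟩⟩
  · dsimp only; split <;> positivity
  · rw [Finset.sum_congr rfl fun k hk => if_pos hk, Finset.sum_const, nsmul_eq_mul]
    field_simp

/-- link sum of vertex v -/
noncomputable def linkSum (E : Finset (Finset ℕ)) (v : ℕ) (x : ℕ → ℝ) : ℝ :=
  ∑ e ∈ E.filter (fun e => v ∈ e), ∏ k ∈ e.erase v, x k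

lemma key_ineq (G : UniformHypergraph r) {i j : ℕ} (hij : i ≠ j) (hi : i ∈ G.verts)
    (hcov : ∀ e ∈ G.edges, ¬(i ∈ e ∧ j ∈ e)) {x : ℕ → ℝ} (hx : G.LegalWeighting x)
    (hL : linkSum G.edges j x ≤ linkSum G.edges i x) :
    ∃ y, (G.removeVert j).LegalWeighting y ∧
      polyValue G.edges x ≤ polyValue (G.removeVert j).edges y := by
  classical
  set y : ℕ → ℝ := Function.update (Function.update x j 0) i (x i + x j) with hy
  have hyi : y i = x i + x j := by simp [hy]
  have hyj : y j = 0 := by simp [hy, Function.update_of_ne (Ne.symm hij)]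
  have hyk : ∀ k, k ≠ i → k ≠ j → y k = x k := by
    intro k hki hkj
    simp [hy, Function.update_of_ne hki, Function.update_of_ne hkj]
  have hynn : ∀ k, 0 ≤ y k := by
    intro k
    by_cases h1 : k = i
    · rw [h1, hyi]; exact add_nonneg (hx.1 i) (hx.1 j)
    by_cases h2 : k = j
    · rw [h2, hyj]
    · rw [hyk k h1 h2]; exact hx.1 k
  refine ⟨y, ⟨hynn, ?_, ?_⟩, ?_⟩
  · -- support
    intro k hk
    by_cases h2 : k = j
    · subst h2; exact hyj
    · have hk' : k ∉ G.verts := fun h => hk (Finset.mem_erase.mpr ⟨h2, h⟩)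
      have h1 : k ≠ i := fun h => hk' (h ▸ hi)
      rw [hyk k h1 h2]; exact hx.2.1 k hk'
  · -- sum = 1
    show ∑ k ∈ (G.verts.erase j), y k = 1
    rw [Finset.sum_erase _ hyj, ← hx.2.2]
    by_cases hjv : j ∈ G.verts
    · have hje : j ∈ G.verts.erase i := Finset.mem_erase.mpr ⟨Ne.symm hij, hjv⟩
      have hs : ∑ k ∈ (G.verts.erase i).erase j, y k
          = ∑ k ∈ (G.verts.erase i).erase j, x k :=
        Finset.sum_congr rfl fun k hk => hyk k
          (Finset.ne_of_mem_erase (Finset.mem_of_mem_erase hk)) (Finset.ne_of_mem_erase hk)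
      rw [← Finset.add_sum_erase _ y hi, ← Finset.add_sum_erase _ x hi,
        ← Finset.add_sum_erase _ y hje, ← Finset.add_sum_erase _ x hje, hyi, hyj, hs]
      ring
    · have hxj : x j = 0 := hx.2.1 j hjv
      have hs : ∑ k ∈ G.verts.erase i, y k = ∑ k ∈ G.verts.erase i, x k :=
        Finset.sum_congr rfl fun k hk => hyk k (Finset.ne_of_mem_erase hk)
          (fun h => hjv (h ▸ Finset.mem_of_mem_erase hk))
      rw [← Finset.add_sum_erase _ y hi, ← Finset.add_sum_erase _ x hi, hyi, hxj, hs]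
      ring
  · -- value inequality
    have hsplit : ∀ (E : Finset (Finset ℕ)) (z : ℕ → ℝ),
        polyValue E z = ∑ e ∈ E.filter (fun e => i ∈ e), ∏ k ∈ e, z k
          + ∑ e ∈ E.filter (fun e => i ∉ e), ∏ k ∈ e, z k := by
      intro E z
      exact (Finset.sum_filter_add_sum_filter_not E _ _).symm
    -- G side
    have hA : ∑ e ∈ G.edges.filter (fun e => i ∈ e), ∏ k ∈ e, x k
        = x i * linkSum G.edges i x := by
      rw [linkSum, Finset.mul_sum]
      refine Finset.sum_congr rfl fun e he => ?_
      exact (Finset.mul_prod_erase e x (Finset.mem_filter.mp he).2).symm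
    have hBC : (G.edges.filter (fun e => i ∉ e)).filter (fun e => j ∈ e)
        = G.edges.filter (fun e => j ∈ e) := by
      rw [Finset.filter_filter]
      refine Finset.filter_congr fun e he => ?_
      constructor
      · exact fun h => h.2
      · exact fun h => ⟨fun hie => hcov e he ⟨hie, h⟩, h⟩
    have hB : ∑ e ∈ G.edges.filter (fun e => j ∈ e), ∏ k ∈ e, x k
        = x j * linkSum G.edges j x := by
      rw [linkSum, Finset.mul_sum]
      refine Finset.sum_congr rfl fun e he => ?_
      exact (Finset.mul_prod_erase e x (Finset.mem_filter.mp he).2).symm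
    have hGx : polyValue G.edges x
        = x i * linkSum G.edges i x + x j * linkSum G.edges j x
          + ∑ e ∈ (G.edges.filter (fun e => i ∉ e)).filter (fun e => j ∉ e),
              ∏ k ∈ e, x k := by
      rw [hsplit G.edges x, hA,
        ← Finset.sum_filter_add_sum_filter_not (G.edges.filter (fun e => i ∉ e))
          (fun e => j ∈ e), hBC, hB]
      ring
    -- H side
    have hAy : (G.edges.filter (fun e => j ∉ e)).filter (fun e => i ∈ e)
        = G.edges.filter (fun e => i ∈ e) := by
      rw [Finset.filter_filter]
      refine Finset.filter_congr fun e he => ?_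
      constructor
      · exact fun h => h.2
      · exact fun h => ⟨fun hje => hcov e he ⟨h, hje⟩, h⟩
    have hCy : (G.edges.filter (fun e => j ∉ e)).filter (fun e => i ∉ e)
        = (G.edges.filter (fun e => i ∉ e)).filter (fun e => j ∉ e) := by
      rw [Finset.filter_filter, Finset.filter_filter]
      exact Finset.filter_congr fun e _ => and_comm
    have hprodA : ∀ e ∈ G.edges.filter (fun e => i ∈ e),
        ∏ k ∈ e, y k = (x i + x j) * ∏ k ∈ e.erase i, x k := by
      intro e he
      have hie : i ∈ e := (Finset.mem_filter.mp he).2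
      have hje : j ∉ e := fun hje => hcov e (Finset.mem_filter.mp he).1 ⟨hie, hje⟩
      rw [← Finset.mul_prod_erase e y hie, hyi]
      congr 1
      refine Finset.prod_congr rfl fun k hk => ?_
      exact hyk k (Finset.ne_of_mem_erase hk) (fun h => hje (h ▸ Finset.mem_of_mem_erase hk))
    have hprodC : ∀ e ∈ (G.edges.filter (fun e => i ∉ e)).filter (fun e => j ∉ e),
        ∏ k ∈ e, y k = ∏ k ∈ e, x k := by
      intro e he
      have h1 := (Finset.mem_filter.mp (Finset.mem_filter.mp he).1).2
      have h2 := (Finset.mem_filter.mp he).2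
      refine Finset.prod_congr rfl fun k hk => ?_
      exact hyk k (fun h => h1 (h ▸ hk)) (fun h => h2 (h ▸ hk))
    have hHy : polyValue (G.removeVert j).edges y
        = (x i + x j) * linkSum G.edges i x
          + ∑ e ∈ (G.edges.filter (fun e => i ∉ e)).filter (fun e => j ∉ e),
              ∏ k ∈ e, x k := by
      show polyValue (G.edges.filter (fun e => j ∉ e)) y = _
      rw [hsplit (G.edges.filter (fun e => j ∉ e)) y, hAy, hCy,
        Finset.sum_congr rfl hprodA, Finset.sum_congr rfl hprodC,
        ← Finset.mul_sum, linkSum]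
    rw [hGx, hHy]
    have := mul_le_mul_of_nonneg_left hL (hx.1 j)
    nlinarith
end UniformHypergraph


/-- Every dense hypergraph covers pairs. -/
theorem dense_covers_pairs {r : ℕ} (G : UniformHypergraph r) (hG : G.Dense) :
    ∀ i ∈ G.verts, ∀ j ∈ G.verts, i ≠ j → ∃ e ∈ G.edges, i ∈ e ∧ j ∈ e := by
  intro i hi j hj hij
  by_contra hcon
  have hcov : ∀ e ∈ G.edges, ¬(i ∈ e ∧ j ∈ e) := fun e he h => hcon ⟨e, he, h⟩
  have hcov' : ∀ e ∈ G.edges, ¬(j ∈ e ∧ i ∈ e) := fun e he h => hcov e he ⟨h.2, h.1⟩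
  have hMi := hG _ (G.removeVert_proper hi)
  have hMj := hG _ (G.removeVert_proper hj)
  have hlt : max (G.removeVert i).lagrangian (G.removeVert j).lagrangian < G.lagrangian :=
    max_lt hMi hMj
  have hle : G.lagrangian ≤ max (G.removeVert i).lagrangian (G.removeVert j).lagrangian := by
    rw [UniformHypergraph.lagrangian]
    apply csSup_le (G.lagrangianSet_nonempty ⟨i, hi⟩)
    rintro l ⟨x, hx, rfl⟩
    rcases le_total (UniformHypergraph.linkSum G.edges j x) (UniformHypergraph.linkSum G.edges i x) with hL | hL
    · obtain ⟨y, hy, hval⟩ := G.key_ineq hij hi hcov hx hL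
      refine hval.trans (le_trans ?_ (le_max_right _ _))
      exact le_csSup (G.removeVert j).bddAbove_lagrangianSet ⟨y, hy, rfl⟩
    · obtain ⟨y, hy, hval⟩ := G.key_ineq hij.symm hj hcov' hx hL
      refine hval.trans (le_trans ?_ (le_max_left _ _))
      exact le_csSup (G.removeVert i).bddAbove_lagrangianSet ⟨y, hy, rfl⟩
  exact absurd hle (not_le.mpr hlt)
end

section
/- Let H₁ = [t−1]^{(3)} ∖ {(t−3)(t−2)(t−1)} and let x be an optimum weighting of H₁. If x₁ = … = x_{t−4} = a and x_{t−3} = x_{t−2} = x_{t−1} = b, then b = a − a² and 3a² − (t−1)a + 1 = 0; moreover λ(H₁) = C(t−4,3)a³ + 3C(t−4,2)a²b + 3(t−4)ab². -/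
set_option maxHeartbeats 1600000

open Finset

noncomputable def ek (k : ℕ) (S : Finset ℕ) (y : ℕ → ℝ) : ℝ :=
  ∑ e ∈ S.powersetCard k, ∏ i ∈ e, y i

lemma ek_zero (S : Finset ℕ) (y : ℕ → ℝ) : ek 0 S y = 1 := by
  simp [ek]

lemma ek_insert {v : ℕ} {S : Finset ℕ} (h : v ∉ S) (k : ℕ) (y : ℕ → ℝ) :
    ek (k+1) (insert v S) y = ek (k+1) S y + y v * ek k S y := by
  unfold ek
  rw [powersetCard_succ_insert h, sum_union, sum_image, mul_sum]
  · congr 1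
    refine sum_congr rfl fun e he => ?_
    rw [prod_insert]
    intro hv
    exact h ((mem_powersetCard.mp he).1 hv)
  · intro e₁ h₁ e₂ h₂ hee
    have hv1 : v ∉ e₁ := fun hv => h ((mem_powersetCard.mp h₁).1 hv)
    have hv2 : v ∉ e₂ := fun hv => h ((mem_powersetCard.mp h₂).1 hv)
    rw [← erase_insert hv1, ← erase_insert hv2, hee]
  · rw [disjoint_left]
    intro e he hei
    obtain ⟨e', he', rfl⟩ := mem_image.mp hei
    exact h ((mem_powersetCard.mp he).1 (mem_insert_self v e'))

lemma ek_const {S : Finset ℕ} {c : ℝ} {y : ℕ → ℝ} (hc : ∀ i ∈ S, y i = c) :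
    ∀ k, ek k S y = (S.card.choose k : ℝ) * c ^ k := by
  induction S using Finset.induction_on with
  | empty =>
    intro k
    cases k with
    | zero => simp [ek_zero]
    | succ k =>
      unfold ek
      rw [powersetCard_eq_empty.mpr (by simp)]
      simp
  | insert _ _ hv ih =>
    rename_i v S
    intro k
    have hc' : ∀ i ∈ S, y i = c := fun i hi => hc i (mem_insert_of_mem hi)
    cases k with
    | zero => simp [ek_zero]
    | succ k =>
      rw [ek_insert hv, ih hc', ih hc', hc v (mem_insert_self v S),
        card_insert_of_notMem hv, Nat.choose_succ_succ]
      push_cast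
      ring


lemma H1_eval (s : ℕ) (y : ℕ → ℝ) (a b u v : ℝ)
    (h1 : y 1 = u) (hA : ∀ i ∈ Finset.Icc 2 (s+1), y i = a)
    (h2 : y (s+2) = b) (h3 : y (s+3) = b) (h4 : y (s+4) = v) :
    UniformHypergraph.polyValue (H1 (s+5)).edges y =
      ((s.choose 3 : ℝ) * a^3 + u * ((s.choose 2 : ℝ) * a^2))
      + 2*b*((s.choose 2 : ℝ) * a^2 + u * ((s:ℝ)*a))
      + b^2*((s:ℝ)*a + u)
      + v*(((s.choose 2 : ℝ) * a^2 + u * ((s:ℝ)*a)) + 2*b*((s:ℝ)*a + u)) := by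
  have hS0 : Finset.Icc 1 (s+1) = insert 1 (Finset.Icc 2 (s+1)) := by
    ext i; simp [Finset.mem_Icc]; omega
  have h1n : (1:ℕ) ∉ Finset.Icc 2 (s+1) := by simp
  have hcard : (Finset.Icc 2 (s+1)).card = s := by rw [Nat.card_Icc]; omega
  have hck : ∀ k, ek k (Finset.Icc 2 (s+1)) y = (s.choose k : ℝ) * a ^ k := by
    intro k; rw [ek_const hA k, hcard]
  -- values on S = Icc 1 (s+1)
  have e0S : ek 0 (Finset.Icc 1 (s+1)) y = 1 := ek_zero _ _
  have e1S : ek 1 (Finset.Icc 1 (s+1)) y = (s:ℝ)*a + u := by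
    rw [hS0, ek_insert h1n 0 y, hck 1, hck 0, h1]
    push_cast [Nat.choose_one_right, Nat.choose_zero_right]; ring
  have e2S : ek 2 (Finset.Icc 1 (s+1)) y = (s.choose 2 : ℝ)*a^2 + u*((s:ℝ)*a) := by
    rw [hS0, ek_insert h1n 1 y, hck 2, hck 1, h1]
    push_cast [Nat.choose_one_right]; ring
  have e3S : ek 3 (Finset.Icc 1 (s+1)) y = (s.choose 3 : ℝ)*a^3 + u*((s.choose 2:ℝ)*a^2) := by
    rw [hS0, ek_insert h1n 2 y, hck 3, hck 2, h1]
  -- insert s+2, s+3, s+4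
  have hn2 : (s+2) ∉ Finset.Icc 1 (s+1) := by simp
  have hn3 : (s+3) ∉ insert (s+2) (Finset.Icc 1 (s+1)) := by simp [Finset.mem_Icc]
  have hn4 : (s+4) ∉ insert (s+3) (insert (s+2) (Finset.Icc 1 (s+1))) := by
    simp [Finset.mem_Icc]
  have hV : Finset.Icc 1 (s+4) =
      insert (s+4) (insert (s+3) (insert (s+2) (Finset.Icc 1 (s+1)))) := by
    ext i; simp [Finset.mem_Icc]; omega
  have hedges : (H1 (s+5)).edges =
      ((Finset.Icc 1 (s+4)).powersetCard 3).erase {s+2, s+3, s+4} := rfl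
  have hmem : ({s+2, s+3, s+4} : Finset ℕ) ∈ (Finset.Icc 1 (s+4)).powersetCard 3 := by
    rw [Finset.mem_powersetCard]
    constructor
    · intro i hi; simp at hi; rcases hi with h|h|h <;> simp [Finset.mem_Icc, h]
    · rw [Finset.card_insert_of_notMem (by simp), Finset.card_insert_of_notMem (by simp)]
      simp
  have hprod : ∏ i ∈ ({s+2, s+3, s+4} : Finset ℕ), y i = b * b * v := by
    rw [Finset.prod_insert (by simp), Finset.prod_insert (by simp), Finset.prod_singleton,
      h2, h3, h4]
    ring
  have hpv : UniformHypergraph.polyValue (H1 (s+5)).edges y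
      = ek 3 (Finset.Icc 1 (s+4)) y - b * b * v := by
    rw [UniformHypergraph.polyValue, hedges, Finset.sum_erase_eq_sub hmem, hprod, ek]
  rw [hpv, hV, ek_insert hn4 2 y, ek_insert hn3 2 y, ek_insert hn3 1 y,
    ek_insert hn2 2 y, ek_insert hn2 1 y, ek_insert hn2 0 y,
    show y (s+4) = v from h4, show y (s+3) = b from h3, show y (s+2) = b from h2,
    e3S, e2S, e1S, e0S]
  ring

/-- For an optimum weighting of `H₁ = [t-1]^{(3)} ∖ {(t-3)(t-2)(t-1)}` with
`x₁ = … = x_{t-4} = a` and `x_{t-3} = x_{t-2} = x_{t-1} = b`, one has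
`b = a - a²`, `3a² - (t-1)a + 1 = 0`, and
`λ(H₁) = C(t-4,3)a³ + 3C(t-4,2)a²b + 3(t-4)ab²`. -/

theorem H1_optimum_weighting {t : ℕ} (ht : 5 ≤ t) (x : ℕ → ℝ)
    (hx : (H1 t).IsOptimal x) (a b : ℝ)
    (ha : ∀ i ∈ Finset.Icc 1 (t - 4), x i = a)
    (hb : ∀ i ∈ Finset.Icc (t - 3) (t - 1), x i = b) :
    b = a - a ^ 2 ∧ 3 * a ^ 2 - ((t : ℝ) - 1) * a + 1 = 0 ∧
    (H1 t).lagrangian = ((t - 4).choose 3 : ℝ) * a ^ 3 +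
      3 * ((t - 4).choose 2 : ℝ) * a ^ 2 * b + 3 * ((t : ℝ) - 4) * a * b ^ 2 := by
  obtain ⟨s, rfl⟩ : ∃ s, t = s + 5 := ⟨t - 5, by omega⟩
  obtain ⟨⟨hnn, hsupp, hsum⟩, hopt⟩ := hx
  rw [show s+5-4 = s+1 by omega] at ha
  rw [show s+5-3 = s+2 by omega, show s+5-1 = s+4 by omega] at hb
  have ha' : ∀ i ∈ Finset.Icc 1 (s+1), x i = a := ha
  have hb' : ∀ i ∈ Finset.Icc (s+2) (s+4), x i = b := hb
  have hx1 : x 1 = a := ha' 1 (by simp)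
  have hx2 : x (s+2) = b := hb' _ (by simp [Finset.mem_Icc])
  have hx3 : x (s+3) = b := hb' _ (by simp [Finset.mem_Icc])
  have hx4 : x (s+4) = b := hb' _ (by simp [Finset.mem_Icc])
  have ha0 : 0 ≤ a := hx1 ▸ hnn 1
  have hb0 : 0 ≤ b := hx2 ▸ hnn (s+2)
  have hverts : (H1 (s+5)).verts = Finset.Icc 1 (s+4) := rfl
  have hV : Finset.Icc 1 (s+4) =
      insert (s+4) (insert (s+3) (insert (s+2) (Finset.Icc 1 (s+1)))) := by
    ext i; simp [Finset.mem_Icc]; omega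
  have hsum' : ∑ i ∈ Finset.Icc 1 (s+4), x i = 1 := hsum
  have hN : ((s:ℝ)+1)*a + 3*b = 1 := by
    rw [hV] at hsum'
    rw [Finset.sum_insert (by simp [Finset.mem_Icc]),
      Finset.sum_insert (by simp [Finset.mem_Icc]),
      Finset.sum_insert (by simp [Finset.mem_Icc])] at hsum'
    rw [Finset.sum_congr rfl ha', Finset.sum_const, Nat.card_Icc] at hsum'
    rw [hx2, hx3, hx4] at hsum'
    push_cast at hsum' ⊢
    simp only [nsmul_eq_mul] at hsum'
    push_cast at hsum'
    linarith
  -- polyValue of x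
  have hpvx : UniformHypergraph.polyValue (H1 (s+5)).edges x =
      ((s.choose 3 : ℝ) * a^3 + a * ((s.choose 2 : ℝ) * a^2))
      + 2*b*((s.choose 2 : ℝ) * a^2 + a * ((s:ℝ)*a))
      + b^2*((s:ℝ)*a + a)
      + b*(((s.choose 2 : ℝ) * a^2 + a * ((s:ℝ)*a)) + 2*b*((s:ℝ)*a + a)) := by
    refine H1_eval s x a b a b hx1 (fun i hi => ha' i ?_) hx2 hx3 hx4
    simp [Finset.mem_Icc] at hi ⊢; omega
  -- upper bound : every legal weighting has polyValue ≤ lagrangian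
  have hbdd : BddAbove {l : ℝ | ∃ y, (H1 (s+5)).LegalWeighting y ∧
      l = UniformHypergraph.polyValue (H1 (s+5)).edges y} := by
    refine ⟨((H1 (s+5)).edges.card : ℝ), fun l hl => ?_⟩
    obtain ⟨y, ⟨hy0, hys, hy1⟩, rfl⟩ := hl
    have hyle1 : ∀ i, y i ≤ 1 := by
      intro i
      by_cases hi : i ∈ (H1 (s+5)).verts
      · calc y i ≤ ∑ j ∈ (H1 (s+5)).verts, y j :=
              Finset.single_le_sum (fun j _ => hy0 j) hi
          _ = 1 := hy1
      · rw [hys i hi]; norm_num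
    calc UniformHypergraph.polyValue (H1 (s+5)).edges y
        ≤ ∑ _e ∈ (H1 (s+5)).edges, (1:ℝ) := by
          refine Finset.sum_le_sum fun e _ => ?_
          exact Finset.prod_le_one (fun i _ => hy0 i) (fun i _ => hyle1 i)
      _ = ((H1 (s+5)).edges.card : ℝ) := by simp
  have hub : ∀ y, (H1 (s+5)).LegalWeighting y →
      UniformHypergraph.polyValue (H1 (s+5)).edges y ≤ (H1 (s+5)).lagrangian :=
    fun y hy => le_csSup hbdd ⟨y, hy, rfl⟩
  -- perturbation inequality
  set D : ℝ := b^2 + (b - a)*((s:ℝ)*a + 2*b) with hD_def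
  set R : ℝ := (s:ℝ)*a + 2*b with hR_def
  have hR0 : 0 ≤ R := by
    have : (0:ℝ) ≤ (s:ℝ)*a := mul_nonneg (Nat.cast_nonneg s) ha0
    rw [hR_def]; linarith
  have key : ∀ ε : ℝ, -a ≤ ε → ε ≤ b → ε * D - ε^2 * R ≤ 0 := by
    intro ε hε1 hε2
    set y : ℕ → ℝ := fun i => if i = 1 then a + ε else if i = s+4 then b - ε else x i
      with hy_def
    have hy1 : y 1 = a + ε := by simp [hy_def]
    have hy4 : y (s+4) = b - ε := by
      have hne : s + 4 ≠ 1 := by omega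
      simp [hy_def, hne]
    have hyx : ∀ i, i ≠ 1 → i ≠ s+4 → y i = x i := by
      intro i h1 h2; simp only [hy_def]; rw [if_neg h1, if_neg h2]
    have hyA : ∀ i ∈ Finset.Icc 2 (s+1), y i = a := by
      intro i hi
      simp only [Finset.mem_Icc] at hi
      rw [hyx i (by omega) (by omega)]
      exact ha' i (by simp [Finset.mem_Icc]; omega)
    have hy2 : y (s+2) = b := by rw [hyx _ (by omega) (by omega)]; exact hx2
    have hy3 : y (s+3) = b := by rw [hyx _ (by omega) (by omega)]; exact hx3
    have hyleg : (H1 (s+5)).LegalWeighting y := by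
      refine ⟨fun i => ?_, fun i hi => ?_, ?_⟩
      · simp only [hy_def]
        split
        · linarith
        · split
          · linarith
          · exact hnn i
      · rw [hverts, Finset.mem_Icc] at hi
        push_neg at hi
        rw [hyx i (by omega) (by omega)]
        exact hsupp i (by rw [hverts, Finset.mem_Icc]; omega)
      · rw [hverts]
        have step : ∀ i ∈ Finset.Icc 1 (s+4), y i = x i +
            ((if i = 1 then ε else 0) + (if i = s+4 then -ε else 0)) := by
          intro i hi
          by_cases h1 : i = 1
          · subst h1
            rw [hy1, if_pos rfl, if_neg (by omega), hx1]; ring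
          · by_cases h4 : i = s+4
            · subst h4
              rw [hy4, if_neg h1, if_pos rfl, hx4]; ring
            · rw [hyx i h1 h4, if_neg h1, if_neg h4]; ring
        rw [Finset.sum_congr rfl step, Finset.sum_add_distrib, hsum',
          Finset.sum_add_distrib, Finset.sum_ite_eq' _ 1 (fun _ => ε),
          Finset.sum_ite_eq' _ (s+4) (fun _ => -ε)]
        simp [Finset.mem_Icc]
    have hyval := H1_eval s y a b (a+ε) (b-ε) hy1 hyA hy2 hy3 hy4
    have hle := hub y hyleg
    rw [hyval, ← hopt, hpvx] at hle
    have hexp : ((s.choose 3 : ℝ) * a^3 + (a+ε) * ((s.choose 2 : ℝ) * a^2))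
      + 2*b*((s.choose 2 : ℝ) * a^2 + (a+ε) * ((s:ℝ)*a))
      + b^2*((s:ℝ)*a + (a+ε))
      + (b-ε)*(((s.choose 2 : ℝ) * a^2 + (a+ε) * ((s:ℝ)*a)) + 2*b*((s:ℝ)*a + (a+ε)))
      = (((s.choose 3 : ℝ) * a^3 + a * ((s.choose 2 : ℝ) * a^2))
      + 2*b*((s.choose 2 : ℝ) * a^2 + a * ((s:ℝ)*a))
      + b^2*((s:ℝ)*a + a)
      + b*(((s.choose 2 : ℝ) * a^2 + a * ((s:ℝ)*a)) + 2*b*((s:ℝ)*a + a)))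
      + (ε * D - ε^2 * R) := by
      rw [hD_def, hR_def]; ring
    linarith [hle, hexp.ge, hexp.le]
  -- limiting argument
  have aux : ∀ c ε₀ : ℝ, 0 < ε₀ → (∀ ε : ℝ, 0 < ε → ε ≤ ε₀ → c ≤ ε * R) → c ≤ 0 := by
    intro c ε₀ hε₀ h
    by_contra hc
    push_neg at hc
    have hd : 0 < c / (R+1) := div_pos hc (by linarith)
    have hε : 0 < min ε₀ (c / (R+1)) := lt_min hε₀ hd
    have h2 := h _ hε (min_le_left _ _)
    have h3 : min ε₀ (c/(R+1)) ≤ c/(R+1) := min_le_right _ _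
    have h4 : min ε₀ (c/(R+1)) * R ≤ (c/(R+1)) * R := mul_le_mul_of_nonneg_right h3 hR0
    have h5 : (c/(R+1)) * R < c := by
      rw [div_mul_eq_mul_div, div_lt_iff₀ (by linarith)]
      nlinarith
    linarith
  -- the main algebraic conclusions
  have hpair : b = a - a ^ 2 ∧ 3*a^2 - ((s:ℝ)+4)*a + 1 = 0 := by
    by_cases hbpos : 0 < b
    · have hDle : D ≤ 0 := by
        refine aux D b hbpos fun ε hε hεb => ?_
        have := key ε (by linarith) hεb
        nlinarith
      by_cases hapos : 0 < a
      · have hDge : -D ≤ 0 := by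
          refine aux (-D) a hapos fun ε hε hεa => ?_
          have := key (-ε) (by linarith) (by linarith)
          nlinarith
        have hD0 : D = 0 := le_antisymm hDle (by linarith)
        rw [hD_def] at hD0
        have hquad : 3*a^2 - ((s:ℝ)+4)*a + 1 = 0 := by
          linear_combination 3*hD0 + (3*a - 3*b - 1)*hN
        exact ⟨by linear_combination (1/3)*hN + (1/3)*hquad, hquad⟩
      · have ha0' : a = 0 := le_antisymm (not_lt.mp hapos) ha0
        rw [hD_def, ha0'] at hDle
        nlinarith
    · have hb0' : b = 0 := le_antisymm (not_lt.mp hbpos) hb0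
      have hapos : 0 < a := by
        rcases ha0.lt_or_eq with h | h
        · exact h
        · exfalso; rw [← h, hb0'] at hN; norm_num at hN
      have hDge : -D ≤ 0 := by
        refine aux (-D) a hapos fun ε hε hεa => ?_
        have := key (-ε) (by linarith) (by rw [hb0']; linarith)
        nlinarith
      have hs0 : (s:ℝ) = 0 := by
        rw [hD_def, hb0'] at hDge
        have h1 : (s:ℝ)*a^2 ≤ 0 := by nlinarith
        have h2 : (0:ℝ) ≤ (s:ℝ)*a^2 := mul_nonneg (Nat.cast_nonneg s) (sq_nonneg a)
        have : (s:ℝ)*a^2 = 0 := le_antisymm h1 h2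
        rcases mul_eq_zero.mp this with h | h
        · exact h
        · exfalso; nlinarith
      have ha1 : a = 1 := by rw [hs0, hb0'] at hN; linarith
      rw [hb0', ha1, hs0]
      norm_num
  refine ⟨hpair.1, ?_, ?_⟩
  · have := hpair.2
    push_cast
    linear_combination this
  · rw [show s+5-4 = s+1 by omega, ← hopt, hpvx]
    have hc3 : (((s+1).choose 3 : ℕ) : ℝ) = (s.choose 2 : ℝ) + (s.choose 3 : ℝ) := by
      rw [Nat.choose_succ_succ]; push_cast; ring
    have hc2 : (((s+1).choose 2 : ℕ) : ℝ) = (s:ℝ) + (s.choose 2 : ℝ) := by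
      rw [Nat.choose_succ_succ, Nat.choose_one_right]; push_cast; ring
    rw [hc3, hc2]
    push_cast
    ring
end
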